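/- Let α ∈ (0,1). For real numbers 0 ≤ a ≤ b < c ≤ d with b < c, define Γ(x,y) = (y-x)²/(y^(α+1) - x^(α+1)) for 0 ≤ x < y. Then Γ(b,c) ≤ Γ(a,d). -/

import Mathlib

open Set

lemma rpow_split (x p : ℝ) (hx : 0 ≤ x) (hp : 1 < p) : x ^ p = x ^ (p - 1) * x := by
  have h := Real.rpow_add_one' (x := x) (y := p - 1) hx (by intro h; linarith)
  have h2 : p - 1 + 1 = p := by ring
  rw [h2] at h
  exact h

-- key inequality 1: p * y^(p-1) * (y - x) ≤ 2 * (y^p - x^p)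
lemma key1 (p x y : ℝ) (hx : 0 ≤ x) (hxy : x ≤ y) (hp1 : 1 < p) (hp2 : p ≤ 2) :
    p * y ^ (p - 1) * (y - x) ≤ 2 * (y ^ p - x ^ p) := by
  have hy : 0 ≤ y := hx.trans hxy
  have hyp : y ^ p = y ^ (p - 1) * y := rpow_split y p hy hp1
  have hxeq : x ^ p = x ^ (p - 1) * x := rpow_split x p hx hp1
  have hle : x ^ (p - 1) ≤ y ^ (p - 1) :=
    Real.rpow_le_rpow hx hxy (by linarith)
  have hxp : x ^ p ≤ x * y ^ (p - 1) := by nlinarith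
  have hpow : (0:ℝ) ≤ y ^ (p - 1) := Real.rpow_nonneg hy _
  nlinarith [mul_nonneg (mul_nonneg (by linarith : (0:ℝ) ≤ 2 - p)
    (by linarith : (0:ℝ) ≤ y - x)) hpow]

-- key inequality 2: p * x^(p-1) * (y - x) ≤ 2 * (y^p - x^p)
lemma key2 (p x y : ℝ) (hx : 0 ≤ x) (hxy : x ≤ y) (hp1 : 1 < p) (hp2 : p ≤ 2) :
    p * x ^ (p - 1) * (y - x) ≤ 2 * (y ^ p - x ^ p) := by
  have hy : 0 ≤ y := hx.trans hxy
  have hyp : y ^ p = y ^ (p - 1) * y := rpow_split y p hy hp1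
  have hxeq : x ^ p = x ^ (p - 1) * x := rpow_split x p hx hp1
  have hle : x ^ (p - 1) ≤ y ^ (p - 1) :=
    Real.rpow_le_rpow hx hxy (by linarith)
  have hyp2 : y * x ^ (p - 1) ≤ y ^ p := by nlinarith
  have hpow : (0:ℝ) ≤ x ^ (p - 1) := Real.rpow_nonneg hx _
  nlinarith [mul_nonneg (mul_nonneg (by linarith : (0:ℝ) ≤ 2 - p)
    (by linarith : (0:ℝ) ≤ y - x)) hpow]

lemma hasDeriv_lower (p c : ℝ) (hp : 1 ≤ p) (t : ℝ) (hne : c ^ p - t ^ p ≠ 0) :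
    HasDerivAt (fun t => (c - t) ^ 2 / (c ^ p - t ^ p))
      (((2:ℕ) * (c - t) ^ 1 * (-1) * (c ^ p - t ^ p) - (c - t) ^ 2 * (-(p * t ^ (p - 1))))
        / (c ^ p - t ^ p) ^ 2) t := by
  have h1 : HasDerivAt (fun t : ℝ => (c - t) ^ 2) ((2:ℕ) * (c - t) ^ 1 * (-1)) t := by
    simpa using ((hasDerivAt_id t).const_sub c).fun_pow 2
  have h2 : HasDerivAt (fun t : ℝ => c ^ p - t ^ p) (-(p * t ^ (p - 1))) t :=
    (Real.hasDerivAt_rpow_const (Or.inr hp)).const_sub _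
  exact h1.div h2 hne

lemma hasDeriv_upper (p a : ℝ) (hp : 1 ≤ p) (t : ℝ) (hne : t ^ p - a ^ p ≠ 0) :
    HasDerivAt (fun t => (t - a) ^ 2 / (t ^ p - a ^ p))
      (((2:ℕ) * (t - a) ^ 1 * 1 * (t ^ p - a ^ p) - (t - a) ^ 2 * (p * t ^ (p - 1)))
        / (t ^ p - a ^ p) ^ 2) t := by
  have h1 : HasDerivAt (fun t : ℝ => (t - a) ^ 2) ((2:ℕ) * (t - a) ^ 1 * 1) t := by
    simpa using ((hasDerivAt_id t).sub_const a).fun_pow 2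
  have h2 : HasDerivAt (fun t : ℝ => t ^ p - a ^ p) (p * t ^ (p - 1)) t := by
    simpa using (Real.hasDerivAt_rpow_const (Or.inr hp)).sub_const (a ^ p)
  exact h1.div h2 hne

theorem Gamma_monotone (α a b c d : ℝ) (hα : α ∈ Set.Ioo (0 : ℝ) 1)
    (ha : 0 ≤ a) (hab : a ≤ b) (hbc : b < c) (hcd : c ≤ d) :
    (c - b) ^ 2 / (c ^ (α + 1) - b ^ (α + 1)) ≤
      (d - a) ^ 2 / (d ^ (α + 1) - a ^ (α + 1)) := by
  obtain ⟨hα0, hα1⟩ := hα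
  set p := α + 1 with hp_def
  have hp1 : 1 < p := by simp [hp_def]; linarith
  have hp2 : p ≤ 2 := by simp [hp_def]; linarith
  have hb : 0 ≤ b := ha.trans hab
  have hc : 0 < c := hb.trans_lt hbc
  have hrpow_lt : ∀ x y : ℝ, 0 ≤ x → x < y → x ^ p < y ^ p := fun x y hx hxy =>
    Real.rpow_lt_rpow hx hxy (by linarith)
  -- Step 1: antitone in lower endpoint
  have step1 : (c - b) ^ 2 / (c ^ p - b ^ p) ≤ (c - a) ^ 2 / (c ^ p - a ^ p) := by
    have hanti : AntitoneOn (fun t => (c - t) ^ 2 / (c ^ p - t ^ p)) (Icc 0 b) := by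
      have hne : ∀ t ∈ Icc 0 b, c ^ p - t ^ p ≠ 0 := by
        intro t ht
        have := hrpow_lt t c ht.1 (lt_of_le_of_lt ht.2 hbc)
        linarith
      apply antitoneOn_of_deriv_nonpos (convex_Icc 0 b)
      · intro t ht
        exact (hasDeriv_lower p c hp1.le t (hne t ht)).continuousAt.continuousWithinAt
      · intro t ht
        rw [interior_Icc] at ht
        exact (hasDeriv_lower p c hp1.le t
          (hne t (Ioo_subset_Icc_self ht))).differentiableAt.differentiableWithinAt
      · intro t ht
        rw [interior_Icc] at ht
        have ht' := Ioo_subset_Icc_self ht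
        rw [(hasDeriv_lower p c hp1.le t (hne t ht')).deriv]
        have hden : 0 < c ^ p - t ^ p := by
          have := hrpow_lt t c ht'.1 (lt_of_le_of_lt ht'.2 hbc)
          linarith
        apply div_nonpos_of_nonpos_of_nonneg _ (by positivity)
        have hk := key2 p t c ht'.1 (le_of_lt (lt_of_le_of_lt ht'.2 hbc)) hp1 hp2
        have htc : 0 ≤ c - t := by
          have := lt_of_le_of_lt ht'.2 hbc; linarith
        push_cast
        nlinarith [mul_le_mul_of_nonneg_left hk htc]
    exact hanti ⟨ha, hab⟩ ⟨hb, le_refl b⟩ hab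
  -- Step 2: monotone in upper endpoint
  have step2 : (c - a) ^ 2 / (c ^ p - a ^ p) ≤ (d - a) ^ 2 / (d ^ p - a ^ p) := by
    have hac : a < c := lt_of_le_of_lt hab hbc
    have hmono : MonotoneOn (fun t => (t - a) ^ 2 / (t ^ p - a ^ p)) (Icc c d) := by
      have hne : ∀ t ∈ Icc c d, t ^ p - a ^ p ≠ 0 := by
        intro t ht
        have := hrpow_lt a t ha (lt_of_lt_of_le hac ht.1)
        linarith
      apply monotoneOn_of_deriv_nonneg (convex_Icc c d)
      · intro t ht
        exact (hasDeriv_upper p a hp1.le t (hne t ht)).continuousAt.continuousWithinAt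
      · intro t ht
        rw [interior_Icc] at ht
        exact (hasDeriv_upper p a hp1.le t
          (hne t (Ioo_subset_Icc_self ht))).differentiableAt.differentiableWithinAt
      · intro t ht
        rw [interior_Icc] at ht
        have ht' := Ioo_subset_Icc_self ht
        rw [(hasDeriv_upper p a hp1.le t (hne t ht')).deriv]
        have hat : a < t := lt_of_lt_of_le hac ht'.1
        have hden : 0 < t ^ p - a ^ p := by
          have := hrpow_lt a t ha hat
          linarith
        apply div_nonneg _ (by positivity)
        have hk := key1 p a t ha hat.le hp1 hp2
        push_cast
        nlinarith [mul_le_mul_of_nonneg_left hk (by linarith : (0:ℝ) ≤ t - a)]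
    exact hmono ⟨le_refl c, hcd⟩ ⟨hcd, le_refl d⟩ hcd
  exact step1.trans step2
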